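/- (Singleton bound for quotient space codes) Let q be a prime power, H an 𝔽_q-subspace of 𝔽_q^m with dim_{𝔽_q} H = r, and let d ≥ 1. Let Ω ⊆ 𝔽_q^m/H be a set of cosets with |Ω| ≥ 2 such that for all distinct x̄, ȳ ∈ Ω the quotient Hamming distance min_{v ∈ x̄ − ȳ} w_H(v) is at least d. Then |Ω| · q^{d−1} ≤ q^{m−r}. -/

import Mathlib

open Finset

/-- Hamming weight on `𝔽_qᵐ`: the number of nonzero coordinates. -/
def wH {F : Type} [Zero F] [DecidableEq F] {m : ℕ} (v : Fin m → F) : ℕ :=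
  (Finset.univ.filter fun i => v i ≠ 0).card

/-- Quotient minimum Hamming norm on `𝔽_qᵐ ⧸ H`. -/
noncomputable def qnormH {F : Type} [Field F] [Fintype F] [DecidableEq F] {m : ℕ}
    (H : Submodule F (Fin m → F)) (x : (Fin m → F) ⧸ H) : ℕ :=
  sInf {t | ∃ v : Fin m → F, (Submodule.Quotient.mk v : (Fin m → F) ⧸ H) = x ∧ wH v = t}

variable {F : Type} [Field F] [Fintype F] [DecidableEq F] {m : ℕ}

lemma wH_add_le (a b : Fin m → F) : wH (a + b) ≤ wH a + wH b := by
  classical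
  refine le_trans (Finset.card_le_card ?_) (Finset.card_union_le _ _)
  intro i hi
  simp only [Finset.mem_filter, Finset.mem_union, Finset.mem_univ, true_and] at *
  by_contra h
  push_neg at h
  simp [Pi.add_apply, h.1, h.2] at hi

lemma wH_single_le (i : Fin m) (c : F) : wH (Pi.single i c : Fin m → F) ≤ 1 := by
  classical
  refine le_trans (Finset.card_le_card (fun j hj => ?_)) (Finset.card_singleton i).le
  simp only [Finset.mem_filter, Finset.mem_univ, true_and, Finset.mem_singleton] at *
  by_contra h
  exact hj (Pi.single_eq_of_ne h _)

lemma qnormH_le {H : Submodule F (Fin m → F)} {x : (Fin m → F) ⧸ H} {v : Fin m → F}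
    (h : (Submodule.Quotient.mk v : (Fin m → F) ⧸ H) = x) : qnormH H x ≤ wH v :=
  Nat.sInf_le ⟨v, h, rfl⟩

lemma le_qnormH {H : Submodule F (Fin m → F)} {x : (Fin m → F) ⧸ H} {n : ℕ}
    (h : ∀ v : Fin m → F, (Submodule.Quotient.mk v : (Fin m → F) ⧸ H) = x → n ≤ wH v) :
    n ≤ qnormH H x := by
  obtain ⟨v, hv⟩ := Submodule.Quotient.mk_surjective H x
  refine le_csInf ⟨wH v, v, hv, rfl⟩ ?_
  rintro t ⟨w, hw, rfl⟩
  exact h w hw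

lemma key (d : ℕ) (hd : 1 ≤ d) : ∀ (H : Submodule F (Fin m → F))
    (Ω : Set ((Fin m → F) ⧸ H)), (∃ x ∈ Ω, ∃ y ∈ Ω, x ≠ y) →
    (∀ x ∈ Ω, ∀ y ∈ Ω, x ≠ y → d ≤ qnormH H (x - y)) →
    Nat.card Ω * (Fintype.card F) ^ (d - 1)
      ≤ (Fintype.card F) ^ (Module.finrank F ((Fin m → F) ⧸ H)) := by
  induction d, hd using Nat.le_induction with
  | base =>
    intro H Ω _ _
    simp only [Nat.sub_self, pow_zero, mul_one]
    have : Finite ((Fin m → F) ⧸ H) := Quotient.finite _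
    have hle : Nat.card Ω ≤ Nat.card ((Fin m → F) ⧸ H) :=
      Nat.card_le_card_of_injective _ Subtype.val_injective
    have : Fintype ((Fin m → F) ⧸ H) := Fintype.ofFinite _
    have hc : Nat.card ((Fin m → F) ⧸ H)
        = Fintype.card F ^ Module.finrank F ((Fin m → F) ⧸ H) := by
      rw [Nat.card_eq_fintype_card, Module.card_eq_pow_finrank (K := F)]
    omega
  | succ d hd ih =>
    intro H Ω hΩ hdist
    -- find i with e_i ∉ H
    have hne : H ≠ ⊤ := by
      intro htop
      obtain ⟨x, -, y, -, hxy⟩ := hΩ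
      exact hxy ((Submodule.Quotient.subsingleton_iff.2 htop).elim x y)
    obtain ⟨i, hi⟩ : ∃ i : Fin m, (Pi.single i (1:F) : Fin m → F) ∉ H := by
      by_contra h
      push_neg at h
      refine hne (top_unique fun v _ => ?_)
      have : v = ∑ j, Pi.single j (v j) := (Finset.univ_sum_single v).symm
      rw [this]
      refine Submodule.sum_mem _ fun j _ => ?_
      have : (Pi.single j (v j) : Fin m → F) = v j • (Pi.single j (1:F) : Fin m → F) := by
        ext k; by_cases hk : k = j <;> simp [hk, Pi.single_apply]
      rw [this]
      exact H.smul_mem _ (h j)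
    set e : Fin m → F := Pi.single i (1:F) with he
    set H' : Submodule F (Fin m → F) := H ⊔ (F ∙ e) with hH'
    have hle : H ≤ H' := le_sup_left
    set f : ((Fin m → F) ⧸ H) →ₗ[F] ((Fin m → F) ⧸ H') :=
      Submodule.mapQ H H' LinearMap.id hle with hf
    have hfmk : ∀ v : Fin m → F,
        f (Submodule.Quotient.mk v) = Submodule.Quotient.mk v := fun v => by
      simp [hf, Submodule.mapQ_apply]
    -- membership in H' decomposition
    have hmem : ∀ w : Fin m → F, w ∈ H' → ∃ a ∈ H, ∃ c : F, a + c • e = w := by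
      intro w hw
      rw [hH', Submodule.mem_sup] at hw
      obtain ⟨a, ha, b, hb, hab⟩ := hw
      obtain ⟨c, hc⟩ := Submodule.mem_span_singleton.1 hb
      exact ⟨a, ha, c, by rw [hc]; exact hab⟩
    -- injectivity on Ω
    have hinj : Set.InjOn f Ω := by
      intro x hx y hy hfxy
      by_contra hxy
      obtain ⟨u, hu⟩ := Submodule.Quotient.mk_surjective H x
      obtain ⟨w, hw⟩ := Submodule.Quotient.mk_surjective H y
      have : (Submodule.Quotient.mk (u - w) : (Fin m → F) ⧸ H') = 0 := by
        rw [Submodule.Quotient.mk_sub, ← hfmk u, ← hfmk w, hu, hw, hfxy, sub_self]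
      obtain ⟨a, ha, c, hac⟩ := hmem _ ((Submodule.Quotient.mk_eq_zero H').1 this)
      have hrep : (Submodule.Quotient.mk (c • e) : (Fin m → F) ⧸ H) = x - y := by
        rw [← hu, ← hw, ← Submodule.Quotient.mk_sub]
        refine (Submodule.Quotient.eq H).2 ?_
        have : c • e - (u - w) = -a := by rw [← hac]; ring
        rw [this]; exact H.neg_mem ha
      have h1 : qnormH H (x - y) ≤ 1 := le_trans (qnormH_le hrep) (by
        have : c • e = Pi.single i c := by
          ext k; by_cases hk : k = i <;> simp [he, hk, Pi.single_apply]
        rw [this]; exact wH_single_le i c)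
      have h2 := hdist x hx y hy hxy
      omega
    -- distance on image
    have hdist' : ∀ x' ∈ f '' Ω, ∀ y' ∈ f '' Ω, x' ≠ y' → d ≤ qnormH H' (x' - y') := by
      rintro _ ⟨x, hx, rfl⟩ _ ⟨y, hy, rfl⟩ hxy'
      have hxy : x ≠ y := fun h => hxy' (by rw [h])
      refine le_qnormH fun w hw => ?_
      obtain ⟨v, hv⟩ := Submodule.Quotient.mk_surjective H (x - y)
      have hfv : (Submodule.Quotient.mk v : (Fin m → F) ⧸ H') = f x - f y := by
        rw [← hfmk v, hv, map_sub]
      have : (Submodule.Quotient.mk (w - v) : (Fin m → F) ⧸ H') = 0 := by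
        rw [Submodule.Quotient.mk_sub, hw, hfv, sub_self]
      obtain ⟨a, ha, c, hac⟩ := hmem _ ((Submodule.Quotient.mk_eq_zero H').1 this)
      have hrep : (Submodule.Quotient.mk (w - c • e) : (Fin m → F) ⧸ H) = x - y := by
        rw [← hv]
        refine (Submodule.Quotient.eq H).2 ?_
        have ha2 : a = w - v - c • e := eq_sub_of_add_eq hac
        have : w - c • e - v = a := by rw [ha2]; exact sub_right_comm w (c • e) v
        rw [this]; exact ha
      have h1 : d + 1 ≤ wH (w - c • e) := le_trans (hdist x hx y hy hxy) (qnormH_le hrep)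
      have h2 : wH (w - c • e) ≤ wH w + 1 := by
        have hsingle : (-c) • e = Pi.single i (-c) := by
          ext k; by_cases hk : k = i <;> simp [he, hk, Pi.single_apply]
        calc wH (w - c • e) = wH (w + (-c) • e) := by rw [sub_eq_add_neg, ← neg_smul]
        _ ≤ wH w + wH ((-c) • e) := wH_add_le _ _
        _ ≤ wH w + 1 := by rw [hsingle]; exact Nat.add_le_add_left (wH_single_le i (-c)) _
      omega
    -- nonempty pair in image
    have hΩ' : ∃ x' ∈ f '' Ω, ∃ y' ∈ f '' Ω, x' ≠ y' := by
      obtain ⟨x, hx, y, hy, hxy⟩ := hΩ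
      exact ⟨f x, ⟨x, hx, rfl⟩, f y, ⟨y, hy, rfl⟩,
        fun h => hxy (hinj hx hy h)⟩
    have hcard : Nat.card (f '' Ω : Set _) = Nat.card Ω := by
      rw [Nat.card_coe_set_eq, Nat.card_coe_set_eq, Set.ncard_image_of_injOn hinj]
    have hIH := ih H' (f '' Ω) hΩ' hdist'
    -- finrank relation
    have henot0 : e ≠ 0 := fun h => hi (h ▸ H.zero_mem)
    have hinf : H ⊓ (F ∙ e) = ⊥ := by
      refine (Submodule.eq_bot_iff _).2 fun w ⟨hwH, hwe⟩ => ?_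
      obtain ⟨c, hc⟩ := Submodule.mem_span_singleton.1 hwe
      by_cases hc0 : c = 0
      · rw [← hc, hc0, zero_smul]
      · exact absurd (by simpa [← hc, hc0] using H.smul_mem c⁻¹ hwH) hi
    have hrank : Module.finrank F H' = Module.finrank F H + 1 := by
      have := Submodule.finrank_sup_add_finrank_inf_eq H (F ∙ e)
      rw [hinf, finrank_bot, finrank_span_singleton henot0] at this
      rw [hH']
      omega
    have hq1 : Module.finrank F ((Fin m → F) ⧸ H)
        = Module.finrank F ((Fin m → F) ⧸ H') + 1 := by
      have h1 := Submodule.finrank_quotient_add_finrank H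
      have h2 := Submodule.finrank_quotient_add_finrank H'
      omega
    calc Nat.card Ω * Fintype.card F ^ (d + 1 - 1)
        = (Nat.card (f '' Ω : Set _) * Fintype.card F ^ (d - 1)) * Fintype.card F := by
          rw [hcard]
          rw [mul_assoc, ← pow_succ]
          congr 2
          omega
      _ ≤ Fintype.card F ^ (Module.finrank F ((Fin m → F) ⧸ H')) * Fintype.card F :=
          Nat.mul_le_mul_right _ hIH
      _ = Fintype.card F ^ (Module.finrank F ((Fin m → F) ⧸ H)) := by
          rw [hq1, pow_succ]

/-- **Singleton bound for quotient space codes.** If `Ω ⊆ 𝔽_qᵐ ⧸ H`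
(`dim H = r`, `|Ω| ≥ 2`) has pairwise quotient Hamming distances `≥ d`, then
`|Ω| · q^(d-1) ≤ q^(m-r)`. -/
theorem singleton_bound_qsc (F : Type) [Field F] [Fintype F] [DecidableEq F]
    (q m r d : ℕ) (hq : Fintype.card F = q) (hd : 1 ≤ d)
    (H : Submodule F (Fin m → F)) (hr : Module.finrank F H = r)
    (Ω : Set ((Fin m → F) ⧸ H)) (hΩ : ∃ x ∈ Ω, ∃ y ∈ Ω, x ≠ y)
    (hdist : ∀ x ∈ Ω, ∀ y ∈ Ω, x ≠ y → d ≤ qnormH H (x - y)) :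
    Nat.card Ω * q ^ (d - 1) ≤ q ^ (m - r) := by
  have h := key d hd H Ω hΩ hdist
  have h1 := Submodule.finrank_quotient_add_finrank H
  have hm : Module.finrank F (Fin m → F) = m := by
    simp [Module.finrank_pi]
  rw [hq] at h
  have : Module.finrank F ((Fin m → F) ⧸ H) = m - r := by omega
  rwa [this] at h
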